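/- Let f : ℝ^d → ℝ be differentiable and μ-strongly convex with μ > 0. Let x, x⋆ ∈ ℝ^d, let A > 0, C ≥ 0, and let g be a square-integrable random vector in ℝ^d such that E[g] = ∇f(x) (unbiasedness) and E[‖g − ∇f(x⋆)‖²] ≤ 2A·D_f(x, x⋆) + C (expected smoothness), where D_f(x, x⋆) := f(x) − f(x⋆) − ⟨∇f(x⋆), x − x⋆⟩ is the Bregman divergence of f. Then for every stepsize γ with 0 < γ ≤ 1/A, E[‖(x − γg) − (x⋆ − γ∇f(x⋆))‖²] ≤ (1 − γμ)‖x − x⋆‖² + γ²C. -/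

import Mathlib

open MeasureTheory RealInnerProductSpace

/-- One-step contraction of the stochastic-gradient step: if `f` is differentiable and
`μ`-strongly convex, `g` is an unbiased estimate of `∇f(x)` satisfying the expected
smoothness bound `E‖g - ∇f(x⋆)‖² ≤ 2A·D_f(x,x⋆) + C`, then for any stepsize
`0 < γ ≤ 1/A`, `E‖(x - γg) - (x⋆ - γ∇f(x⋆))‖² ≤ (1 - γμ)‖x - x⋆‖² + γ²C`. -/
theorem sgd_step_contraction
    {d : ℕ} (f : EuclideanSpace ℝ (Fin d) → ℝ)
    (f' : EuclideanSpace ℝ (Fin d) → EuclideanSpace ℝ (Fin d))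
    (hdiff : ∀ y, HasGradientAt f (f' y) y)
    (μ : ℝ) (hμ : 0 < μ)
    (hsc : ∀ y z : EuclideanSpace ℝ (Fin d),
      f y + ⟪f' y, z - y⟫ + μ / 2 * ‖z - y‖ ^ 2 ≤ f z)
    {Ω : Type*} [MeasurableSpace Ω] (P : Measure Ω) [IsProbabilityMeasure P]
    (x xstar : EuclideanSpace ℝ (Fin d)) (A C : ℝ) (hA : 0 < A) (hC : 0 ≤ C)
    (g : Ω → EuclideanSpace ℝ (Fin d)) (hg : MemLp g 2 P)
    (hunbiased : (∫ a, g a ∂P) = f' x)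
    (hes : (∫ a, ‖g a - f' xstar‖ ^ 2 ∂P) ≤
      2 * A * (f x - f xstar - ⟪f' xstar, x - xstar⟫) + C)
    (γ : ℝ) (hγ0 : 0 < γ) (hγA : γ ≤ 1 / A) :
    (∫ a, ‖(x - γ • g a) - (xstar - γ • f' xstar)‖ ^ 2 ∂P) ≤
      (1 - γ * μ) * ‖x - xstar‖ ^ 2 + γ ^ 2 * C := by
  set u := x - xstar with hu
  set v := f' xstar with hv
  -- integrability facts
  have hgi : Integrable g P := hg.integrable (by norm_num)
  have hh : MemLp (fun a => g a - v) 2 P := hg.sub (memLp_const v)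
  have hhi : Integrable (fun a => g a - v) P := hgi.sub (integrable_const v)
  have hInner : Integrable (fun a => ⟪u, g a - v⟫) P := hhi.const_inner u
  have hSq : Integrable (fun a => ‖g a - v‖ ^ 2) P := by
    have := hh.norm.integrable_sq
    simpa [sq] using this
  -- pointwise expansion
  have hpt : ∀ a, ‖(x - γ • g a) - (xstar - γ • v)‖ ^ 2
      = ‖u‖ ^ 2 - 2 * γ * ⟪u, g a - v⟫ + γ ^ 2 * ‖g a - v‖ ^ 2 := by
    intro a
    have h1 : (x - γ • g a) - (xstar - γ • v) = u - γ • (g a - v) := by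
      rw [hu]; module
    rw [h1, norm_sub_sq_real, real_inner_smul_right, norm_smul]
    simp only [Real.norm_eq_abs]
    rw [mul_pow, sq_abs]
    ring
  -- compute the integral
  have hint : (∫ a, ‖(x - γ • g a) - (xstar - γ • v)‖ ^ 2 ∂P)
      = ‖u‖ ^ 2 - 2 * γ * ⟪u, f' x - v⟫ + γ ^ 2 * (∫ a, ‖g a - v‖ ^ 2 ∂P) := by
    simp_rw [hpt]
    have e1 : ∀ a : Ω, ‖u‖ ^ 2 - 2 * γ * ⟪u, g a - v⟫ + γ ^ 2 * ‖g a - v‖ ^ 2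
        = ‖u‖ ^ 2 + ((-(2 * γ)) * ⟪u, g a - v⟫ + γ ^ 2 * ‖g a - v‖ ^ 2) := by
      intro a; ring
    simp_rw [e1]
    have hIeq : (∫ a, ⟪u, g a - v⟫ ∂P) = ⟪u, f' x - v⟫ := by
      rw [integral_inner hhi, integral_sub hgi (integrable_const v), hunbiased,
        integral_const]
      simp
    have hI1 : Integrable (fun a => (-(2 * γ)) * ⟪u, g a - v⟫) P := hInner.const_mul _
    have hI2 : Integrable (fun a => γ ^ 2 * ‖g a - v‖ ^ 2) P := hSq.const_mul _
    have hI3 : Integrable (fun a => (-(2 * γ)) * ⟪u, g a - v⟫ + γ ^ 2 * ‖g a - v‖ ^ 2) P :=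
      hI1.add hI2
    rw [integral_add (integrable_const _) hI3, integral_add hI1 hI2,
      integral_const_mul, integral_const_mul, integral_const, hIeq]
    simp
    ring
  rw [hint]
  -- strong convexity facts
  have hD : 0 ≤ f x - f xstar - ⟪v, u⟫ := by
    have h := hsc xstar x
    rw [← hu, ← hv] at h
    nlinarith [sq_nonneg ‖u‖]
  have hcoer : ⟪u, f' x - v⟫ ≥ (f x - f xstar - ⟪v, u⟫) + μ / 2 * ‖u‖ ^ 2 := by
    have h1 := hsc x xstar
    have h2 : xstar - x = -u := by rw [hu]; abel
    rw [h2] at h1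
    have h3 : ⟪f' x, -u⟫ = -⟪f' x, u⟫ := inner_neg_right _ _
    have h4 : ⟪u, f' x - v⟫ = ⟪f' x, u⟫ - ⟪v, u⟫ := by
      rw [inner_sub_right, real_inner_comm u (f' x), real_inner_comm u v]
    rw [h3] at h1
    rw [h4]
    have h5 : ‖(-u : EuclideanSpace ℝ (Fin d))‖ = ‖u‖ := norm_neg u
    rw [h5] at h1
    linarith
  have hγA' : γ * A ≤ 1 := by
    have := mul_le_mul_of_nonneg_right hγA hA.le
    rwa [one_div_mul_cancel hA.ne'] at this
  have hIub := hes
  nlinarith [sq_nonneg γ, mul_nonneg (mul_nonneg hγ0.le hγ0.le) hC,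
    mul_le_mul_of_nonneg_left hIub (sq_nonneg γ),
    mul_le_mul_of_nonneg_left hcoer.le (by positivity : (0:ℝ) ≤ 2 * γ),
    mul_nonneg hγ0.le hD]
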